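/- Let H be a Hausdorff, abelian, cancellative, reduced topological monoid allowing arbitrary decimation and allowing dissociation. If H is topologically factorial, then every atom of H is topologically prime. -/
import Mathlib


def Reduced (H : Type) [Monoid H] : Prop := ∀ u : H, IsUnit u → u = 1

def AllowsArbitraryDecimation (H : Type) [CommMonoid H] [TopologicalSpace H] : Prop :=
  ∀ (ι : Type) (f : ι → H), Multipliable f → ∀ S : Set ι, Multipliable fun i : S => f i

/-- `H` allows dissociation: a convergent product whose factors are themselves
convergent products converges as the product over the disjoint union. -/
def AllowsDissociation (H : Type) [CommMonoid H] [TopologicalSpace H] : Prop :=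
  ∀ (ι : Type) (κ : ι → Type) (e : ι → H) (b : H) (f : ∀ i, κ i → H),
    HasProd e b → (∀ i, HasProd (f i) (e i)) →
      HasProd (fun p : Σ i, κ i => f p.1 p.2) b

section Aux
variable {H : Type} [CancelCommMonoid H] [TopologicalSpace H] [T2Space H] [ContinuousMul H]

/-- No convergent product has infinitely many copies of a non-identity factor. -/
lemma finite_fiber_of_hasProd
    (hdec : ∀ (ι : Type) (f : ι → H), Multipliable f → ∀ S : Set ι, Multipliable fun i : S => f i)
    {ι : Type} {F : ι → H} {x p : H} (hF : HasProd F x) (hp : p ≠ 1) :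
    {j | F j = p}.Finite := by
  by_contra hinf
  replace hinf : {j | F j = p}.Infinite := hinf
  have h1 : Multipliable fun j : {j | F j = p} => F j := hdec ι F hF.multipliable _
  have hmul : Multipliable fun j : {j | F j = p} => p := by
    refine h1.congr fun j => ?_
    exact j.2
  haveI : Infinite {j | F j = p} := hinf.to_subtype
  -- take a countable infinite subset
  set T : Set {j | F j = p} := Set.range (Infinite.natEmbedding {j | F j = p}) with hT
  have h2 : Multipliable fun j : T => p := hdec _ _ hmul T
  obtain ⟨a, ha⟩ := h2
  -- transfer to ℕ
  have e : ℕ ≃ T := Equiv.ofInjective _ (Infinite.natEmbedding {j | F j = p}).injective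
  have h3 : HasProd (fun _ : ℕ => p) a := by
    have := (Equiv.hasProd_iff e (f := fun _ : T => p) (a := a)).mpr ha
    exact this
  -- partial products over ranges: p ^ n → a
  have h4 : Filter.Tendsto (fun n : ℕ => p ^ n) Filter.atTop (nhds a) := by
    have := h3.comp Filter.tendsto_finset_range
    exact this.congr fun n => by simp [Function.comp, Finset.prod_const]
  have h5 : Filter.Tendsto (fun n : ℕ => p ^ (n + 1)) Filter.atTop (nhds a) :=
    h4.comp (Filter.tendsto_add_atTop_nat 1)
  have h6 : Filter.Tendsto (fun n : ℕ => p * p ^ n) Filter.atTop (nhds (p * a)) :=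
    Filter.Tendsto.const_mul p h4
  have h7 : a = p * a := by
    refine tendsto_nhds_unique h5 ?_
    simpa [pow_succ, mul_comm] using h6
  have : p = 1 := by
    have h8 : p * a = 1 * a := by rw [one_mul]; exact h7.symm
    exact mul_right_cancel h8
  exact hp this

/-- A factor divides a convergent product. -/
lemma factor_dvd_of_hasProd
    (hdec : ∀ (ι : Type) (f : ι → H), Multipliable f → ∀ S : Set ι, Multipliable fun i : S => f i)
    {ι : Type} {F : ι → H} {x : H} (hF : HasProd F x) (j : ι) : F j ∣ x := by
  have hs : HasProd (F ∘ (↑) : ({j} : Set ι) → H) (F j) := by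
    have : HasProd (F ∘ (↑) : ({j} : Set ι) → H) ((F ∘ (↑)) (default : ({j} : Set ι))) :=
      hasProd_unique _
    simpa using this
  have hc : Multipliable (F ∘ (↑) : (({j} : Set ι)ᶜ : Set ι) → H) :=
    hdec ι F hF.multipliable _
  have := hs.mul_compl hc.hasProd
  exact ⟨_, (tendsto_nhds_unique hF this)⟩
end Aux


def PIrred {H : Type} [CommMonoid H] (p : H) : Prop :=
  p ≠ 1 ∧ ∀ l : List H, (∀ x ∈ l, x ≠ 1) → p = l.prod → p ∈ l

/-- Topologically prime. -/
def TopPrime {H : Type} [CommMonoid H] [TopologicalSpace H] (p : H) : Prop :=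
  p ≠ 1 ∧ ∀ (ι : Type) (f : ι → H) (g : H), HasProd f g → p ∣ g → ∃ i, p ∣ f i

def TopFactorial (H : Type) [CommMonoid H] [TopologicalSpace H] : Prop :=
  ∀ h : H, h ≠ 1 →
    (∃ (ι : Type) (f : ι → H), (∀ i, PIrred (f i)) ∧ HasProd f h) ∧
    ∀ (ι κ : Type) (f : ι → H) (g : κ → H), (∀ i, PIrred (f i)) → (∀ j, PIrred (g j)) →
      HasProd f h → HasProd g h →
      ∀ x : H, Nat.card {i : ι | f i = x} = Nat.card {j : κ | g j = x}


section Main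
variable {H : Type} [CancelCommMonoid H] [TopologicalSpace H] [T2Space H] [ContinuousMul H]

/-- Every element (including 1) has an atom factorisation, given topological factoriality. -/
lemma exists_atom_fact (hfac : TopFactorial H) (y : H) :
    ∃ (κ : Type) (f : κ → H), (∀ j, PIrred (f j)) ∧ HasProd f y := by
  by_cases hy : y = 1
  · exact ⟨Empty, fun x => x.elim, fun j => j.elim, hy ▸ hasProd_empty⟩
  · obtain ⟨⟨ι, f, hf, hp⟩, -⟩ := hfac y hy
    exact ⟨ι, f, hf, hp⟩
end Main

/-- if `H` is topologically factorial and allows dissociation, then every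
atom of `H` is topologically prime. -/
theorem atoms_are_topPrime_of_topFactorial {H : Type} [CancelCommMonoid H]
    [TopologicalSpace H] [T2Space H] [ContinuousMul H]
    (hred : Reduced H) (hdec : AllowsArbitraryDecimation H)
    (hdis : AllowsDissociation H) (hfac : TopFactorial H) :
    ∀ p : H, PIrred p → TopPrime p := by
  intro p hp
  refine ⟨hp.1, ?_⟩
  intro ι f g hfg hdvd
  obtain ⟨c, hc⟩ := hdvd
  -- g ≠ 1
  have hg1 : g ≠ 1 := by
    intro h
    apply hp.1
    exact hred p ⟨⟨p, c, (h ▸ hc).symm, by rw [mul_comm]; exact (h ▸ hc).symm⟩, rfl⟩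
  -- Side A: factorisation of g containing p explicitly
  obtain ⟨κc, fc, hfc, hfcp⟩ := exists_atom_fact hfac c
  set e : Bool → H := fun b => bif b then p else c with he
  have heg : HasProd e g := by
    have := hasProd_fintype e
    have hval : ∏ b, e b = g := by
      rw [Fintype.prod_bool]; simp [he, hc, mul_comm]
    rwa [hval] at this
  set κA : Bool → Type := fun b => bif b then PUnit else κc with hκA
  set fA : ∀ b, κA b → H := fun b => match b with
    | true => fun _ => p
    | false => fc with hfA
  have hAi : ∀ b, HasProd (fA b) (e b) := by
    intro b
    cases b
    · exact hfcp
    · show HasProd (fun _ : PUnit => p) p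
      exact hasProd_unique _
  have hA : HasProd (fun q : Σ b, κA b => fA q.1 q.2) g := hdis Bool κA e g fA heg hAi
  have hAatom : ∀ q : Σ b, κA b, PIrred (fA q.1 q.2) := by
    rintro ⟨b, k⟩
    cases b
    · exact hfc k
    · exact hp
  -- Side B: factorisation of g refining f
  have hB0 : ∀ i : ι, ∃ (κ : Type) (ff : κ → H), (∀ j, PIrred (ff j)) ∧ HasProd ff (f i) :=
    fun i => exists_atom_fact hfac (f i)
  choose κB fB hBatom hBprod using hB0
  have hB : HasProd (fun q : Σ i, κB i => fB q.1 q.2) g := hdis ι κB f g fB hfg hBprod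
  -- uniqueness of multiplicities
  have hcard := (hfac g hg1).2 (Σ b, κA b) (Σ i, κB i)
    (fun q => fA q.1 q.2) (fun q => fB q.1 q.2) hAatom (fun q => hBatom q.1 q.2) hA hB p
  -- the A-side set is finite and nonempty
  have hAfin : {q : Σ b, κA b | fA q.1 q.2 = p}.Finite :=
    finite_fiber_of_hasProd hdec hA hp.1
  have hAmem : (⟨true, PUnit.unit⟩ : Σ b, κA b) ∈ {q : Σ b, κA b | fA q.1 q.2 = p} := rfl
  have hApos : 0 < Nat.card {q : Σ b, κA b | fA q.1 q.2 = p} := by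
    haveI : Finite {q : Σ b, κA b | fA q.1 q.2 = p} := hAfin.to_subtype
    exact Nat.card_pos_iff.mpr ⟨⟨⟨_, hAmem⟩⟩, inferInstance⟩
  -- hence the B-side set is nonempty
  have hBne : {q : Σ i, κB i | fB q.1 q.2 = p}.Nonempty := by
    by_contra hne
    rw [Set.not_nonempty_iff_eq_empty] at hne
    rw [hcard] at hApos
    simp [hne] at hApos
  obtain ⟨⟨i, k⟩, hq⟩ := hBne
  exact ⟨i, hq ▸ factor_dvd_of_hasProd hdec (hBprod i) k⟩
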